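/- Fix a natural number q ≥ 0 and let h : R → ZMod 2 be any (ZMod 2)-linear map that vanishes on the range of the derivation D (i.e. h(D(r)) = 0 for all r ∈ R). Then h(∑_{a=1}^{2^{q+2}-2} x^a y^{2^{q+2}-1-a}) = 0. -/

import Mathlib

open MvPolynomial Finset

lemma odd_nsmul_char2 {R : Type*} [AddCommMonoid R] [Module (ZMod 2) R]
    {n : ℕ} (hn : Odd n) (p : R) : n • p = p := by
  obtain ⟨m, rfl⟩ := hn
  have h2 : (2 : ℕ) • p = 0 := by
    have : p + p = ((1 : ZMod 2) + 1) • p := by rw [add_smul, one_smul]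
    have h11 : (1 : ZMod 2) + 1 = 0 := by decide
    rw [two_nsmul, this, h11, zero_smul]
  rw [add_nsmul, mul_nsmul, h2, smul_zero, zero_add, one_nsmul]

lemma sum_range_two_mul {A : Type*} [AddCommMonoid A] (M : ℕ) (f : ℕ → A) :
    ∑ i ∈ Finset.range (2 * M), f i = ∑ k ∈ Finset.range M, (f (2 * k) + f (2 * k + 1)) := by
  induction M with
  | zero => simp
  | succ m ih =>
    rw [Finset.sum_range_succ, ← ih, Nat.mul_succ, Finset.sum_range_succ, Finset.sum_range_succ,
      add_assoc]

theorem stmt3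
    (D : Derivation (ZMod 2) (MvPolynomial (Fin 2) (ZMod 2))
      (MvPolynomial (Fin 2) (ZMod 2)))
    (hx : D (X 0) = X 0 ^ 2) (hy : D (X 1) = X 1 ^ 2)
    (q : ℕ)
    (h : MvPolynomial (Fin 2) (ZMod 2) →ₗ[ZMod 2] ZMod 2)
    (hD : ∀ r, h (D r) = 0) :
    h (∑ a ∈ Finset.Icc 1 (2 ^ (q + 2) - 2),
        X 0 ^ a * X 1 ^ (2 ^ (q + 2) - 1 - a)) = 0 := by
  set N := 2 ^ (q + 2) with hN
  set M := 2 ^ (q + 1) - 1 with hM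
  have hN4 : 4 ≤ N := by
    have : 2 ^ 2 ≤ 2 ^ (q + 2) := Nat.pow_le_pow_right (by norm_num) (by omega)
    simpa using this
  have hNM : N - 2 = 2 * M := by
    have : 2 ^ (q + 2) = 2 * 2 ^ (q + 1) := by ring
    have h1 : 1 ≤ 2 ^ (q + 1) := Nat.one_le_two_pow
    omega
  -- key derivation computation
  have key : ∀ a b : ℕ, Odd a → Odd b →
      D (X 0 ^ a * X 1 ^ b) = X 0 ^ (a + 1) * X 1 ^ b + X 0 ^ a * X 1 ^ (b + 1) := by
    intro a b ha hb
    have hxa : D (X 0 ^ a : MvPolynomial (Fin 2) (ZMod 2)) = X 0 ^ (a + 1) := by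
      have ha1 : 1 ≤ a := ha.pos
      rw [Derivation.leibniz_pow, hx, odd_nsmul_char2 ha, smul_eq_mul, ← pow_add]
      congr 1
      omega
    have hyb : D (X 1 ^ b : MvPolynomial (Fin 2) (ZMod 2)) = X 1 ^ (b + 1) := by
      have hb1 : 1 ≤ b := hb.pos
      rw [Derivation.leibniz_pow, hy, odd_nsmul_char2 hb, smul_eq_mul, ← pow_add]
      congr 1
      omega
    rw [Derivation.leibniz, hxa, hyb, smul_eq_mul, smul_eq_mul]
    ring
  -- rewrite sum
  have hsum : (∑ a ∈ Finset.Icc 1 (N - 2), (X 0 ^ a * X 1 ^ (N - 1 - a) :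
      MvPolynomial (Fin 2) (ZMod 2)))
      = D (∑ k ∈ Finset.range M, X 0 ^ (2 * k + 1) * X 1 ^ (N - 3 - 2 * k)) := by
    rw [map_sum]
    rw [← Finset.Ico_add_one_right_eq_Icc, Finset.sum_Ico_eq_sum_range]
    have hrange : N - 2 + 1 - 1 = 2 * M := by omega
    rw [hrange, sum_range_two_mul]
    apply Finset.sum_congr rfl
    intro k hk
    have hkM : k < M := Finset.mem_range.mp hk
    have hOdd1 : Odd (2 * k + 1) := ⟨k, by ring⟩
    have hOdd2 : Odd (N - 3 - 2 * k) := by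
      obtain ⟨m, hm⟩ : ∃ m, N = 2 * m := ⟨2 ^ (q + 1), by rw [hN]; ring⟩
      exact ⟨m - 2 - k, by omega⟩
    rw [key _ _ hOdd1 hOdd2]
    have e1 : 1 + 2 * k = 2 * k + 1 := by omega
    have e2 : N - 1 - (2 * k + 1) = N - 3 - 2 * k + 1 := by omega
    have e3 : 1 + (2 * k + 1) = 2 * k + 1 + 1 := by omega
    have e4 : N - 1 - (2 * k + 1 + 1) = N - 3 - 2 * k := by omega
    rw [e1, e2, e3, e4, add_comm]
  rw [hsum, hD]
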